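/- Assume 𝒜 is smooth. Let S be the additive submonoid of ℕ² generated by the vectors (a, α−a) for a ∈ 𝒜, let G be the subgroup of ℤ² generated by these vectors, and set S̄ := G ∩ ℕ². For u = (u₁,u₂) ∈ S̄, every u₁ + u₂ is divisible by α, and define deg u := (u₁ + u₂)/α. Then max{deg u : u ∈ (S̄ ∖ S) ∪ {(0,0)}} + 1 = min{m ≥ 1 : m𝒜 is full}. -/

import Mathlib

open scoped Pointwise

/-- The `m`-fold sumset of a finite set `A ⊆ ℕ`, with `0 • A = {0}`. -/
def sumset (A : Finset ℕ) : ℕ → Finset ℕ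
  | 0 => {0}
  | m + 1 => sumset A m + A

/-- A subset of `ℕ` is full iff it equals `{0, 1, …, n}` for some `n`. -/
def IsFull (B : Finset ℕ) : Prop := ∃ n : ℕ, B = Finset.Iic n

/-- `{i, …, j}` is a gap of `B`: disjoint from `B`, with `i - 1 ∈ B` and `j + 1 ∈ B`. -/
def IsGap (B : Finset ℕ) (i j : ℕ) : Prop :=
  1 ≤ i ∧ i ≤ j ∧ (∀ k, i ≤ k → k ≤ j → k ∉ B) ∧ i - 1 ∈ B ∧ j + 1 ∈ B

/-- `λ(B)`: the maximal length of a gap of `B` (`0` if there are no gaps). -/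
noncomputable def gapLen (B : Finset ℕ) : ℕ :=
  sSup {n | ∃ i j, IsGap B i j ∧ n = j - i + 1}

/-- Property `(P₁)`. -/
def P1 (A : Finset ℕ) (α : ℕ) : Prop :=
  ∀ m : ℕ, ¬ IsFull (sumset A m) → ¬ IsFull (sumset A m + ({0, α} : Finset ℕ))

/-- Property `(P₂)`. -/
def P2 (A : Finset ℕ) (α : ℕ) : Prop :=
  ∀ m : ℕ, ¬ IsFull (sumset A m) →
    ¬ ((∀ k, k ≤ α → k ∈ sumset A m) ∧
       (∀ k, (m - 1) * α ≤ k → k ≤ m * α → k ∈ sumset A m))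

/-- The combinatorial reduction number `r(𝒜)`. -/
noncomputable def rA (A : Finset ℕ) (α : ℕ) : ℕ :=
  sInf {r : ℕ | sumset A (r + 1) = ({0, α} : Finset ℕ) + sumset A r}

/-- The combinatorial regularity `reg(𝒜)`. -/
noncomputable def regA (A : Finset ℕ) : ℕ :=
  sInf {m : ℕ | 1 ≤ m ∧ IsFull (sumset A m)}

/-- For smooth `𝒜`, with `S̄ := G ∩ ℕ²`: every `u ∈ S̄` has `α ∣ u₁ + u₂`, and
`max {deg u | u ∈ (S̄ ∖ S) ∪ {0}} + 1 = min {m ≥ 1 | m𝒜 is full}`,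
where `deg u = (u₁ + u₂)/α`. -/

lemma mem_sumset_add {A : Finset ℕ} {x y m n : ℕ} (hx : x ∈ sumset A m) (hy : y ∈ sumset A n) :
    x + y ∈ sumset A (m + n) := by
  induction n generalizing y with
  | zero => simp [sumset] at hy; subst hy; simpa using hx
  | succ n ih =>
    rw [sumset] at hy
    obtain ⟨b, hb, a, ha, rfl⟩ := Finset.mem_add.1 hy
    have h2 := ih hb
    show x + (b + a) ∈ sumset A ((m + n) + 1)
    rw [sumset]
    exact Finset.mem_add.2 ⟨x + b, h2, a, ha, by ring⟩

lemma nsmul_mem_sumset {A : Finset ℕ} {a : ℕ} (ha : a ∈ A) (n : ℕ) : n * a ∈ sumset A n := by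
  induction n with
  | zero => simp [sumset]
  | succ n ih =>
    rw [sumset]
    exact Finset.mem_add.2 ⟨n * a, ih, a, ha, by ring⟩

lemma zero_mem_sumset {A : Finset ℕ} (h0 : 0 ∈ A) (m : ℕ) : 0 ∈ sumset A m := by
  simpa using nsmul_mem_sumset h0 m

lemma sumset_mono {A : Finset ℕ} (h0 : 0 ∈ A) {x m n : ℕ} (hx : x ∈ sumset A m) (h : m ≤ n) :
    x ∈ sumset A n := by
  have := mem_sumset_add hx (zero_mem_sumset h0 (n - m))
  simpa [Nat.add_sub_cancel' h] using this

lemma sumset_bound {A : Finset ℕ} {α : ℕ} (hb : ∀ a ∈ A, a ≤ α) {x m : ℕ}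
    (hx : x ∈ sumset A m) : x ≤ m * α := by
  induction m generalizing x with
  | zero => simp [sumset] at hx; simp [hx]
  | succ m ih =>
    rw [sumset] at hx
    obtain ⟨b, hb', a, ha, rfl⟩ := Finset.mem_add.1 hx
    have := ih hb'
    have := hb a ha
    nlinarith

lemma full_step {A : Finset ℕ} {α m : ℕ} (h0 : 0 ∈ A) (hαA : α ∈ A)
    (hb : ∀ a ∈ A, a ≤ α) (hm : 1 ≤ m) (h : sumset A m = Finset.Iic (m * α)) :
    sumset A (m + 1) = Finset.Iic ((m + 1) * α) := by
  apply Finset.Subset.antisymm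
  · intro x hx
    simpa using sumset_bound hb hx
  · intro k hk
    simp only [Finset.mem_Iic] at hk
    by_cases hkm : k ≤ m * α
    · exact sumset_mono h0 (h ▸ Finset.mem_Iic.2 hkm) (Nat.le_succ m)
    · have hαk : α ≤ k := by nlinarith [Nat.lt_of_not_le hkm]
      have h1 : k - α ≤ m * α := by
        have : k ≤ m * α + α := by nlinarith
        omega
      have h2 : k - α ∈ sumset A m := h ▸ Finset.mem_Iic.2 h1
      have := mem_sumset_add h2 (show α ∈ sumset A 1 by
        rw [sumset]
        exact Finset.mem_add.2 ⟨0, by simp [sumset], α, hαA, by simp⟩)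
      rw [show k - α + α = k by omega] at this
      exact this

lemma full_of_ge {A : Finset ℕ} {α m : ℕ} (h0 : 0 ∈ A) (h1 : 1 ∈ A) (hαm1 : α - 1 ∈ A)
    (hαA : α ∈ A) (hb : ∀ a ∈ A, a ≤ α) (hα2 : 2 ≤ α) (hm : α - 1 ≤ m) :
    sumset A m = Finset.Iic (m * α) := by
  apply Finset.Subset.antisymm
  · intro x hx
    simpa using sumset_bound hb hx
  · intro k hk
    simp only [Finset.mem_Iic] at hk
    have hαpos : 0 < α := by omega
    set q := k / α with hq
    set r := k % α with hr
    have hqr : q * α + r = k := by rw [hq, hr, Nat.mul_comm]; exact Nat.div_add_mod k α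
    have hrα : r < α := Nat.mod_lt _ hαpos
    by_cases hc : q + r ≤ m
    · -- k = r*1 + q*α
      have m1 : r * 1 ∈ sumset A r := nsmul_mem_sumset h1 r
      have m2 : q * α ∈ sumset A q := nsmul_mem_sumset hαA q
      have := mem_sumset_add m1 m2
      rw [show r * 1 + q * α = k by omega] at this
      exact sumset_mono h0 this (by omega)
    · -- r ≥ 1, q ≥ α - r, k = (α-r)*(α-1) + (q+1+r-α)*α
      have hr1 : 1 ≤ r := by
        by_contra h
        have hr0 : r = 0 := by omega
        have : q ≤ m := by
          have : q * α ≤ m * α := by omega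
          exact Nat.le_of_mul_le_mul_right this (by omega)
        omega
      have hq1 : q + 1 ≤ m := by
        by_contra h'
        have hqm : m ≤ q := by omega
        have : m * α < q * α + r := by nlinarith
        omega
      have hqge : α ≤ q + r := by omega
      have m1 : (α - r) * (α - 1) ∈ sumset A (α - r) := nsmul_mem_sumset hαm1 _
      have m2 : (q + 1 + r - α) * α ∈ sumset A (q + 1 + r - α) := nsmul_mem_sumset hαA _
      have hmem := mem_sumset_add m1 m2
      have heq : (α - r) * (α - 1) + (q + 1 + r - α) * α = k := by
        have hqrZ : (q : ℤ) * α + r = k := by exact_mod_cast hqr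
        zify [show r ≤ α by omega, show 1 ≤ α by omega, show α ≤ q + 1 + r by omega]
        linear_combination hqrZ
      rw [heq] at hmem
      exact sumset_mono h0 hmem (by omega)

lemma mem_S_iff {A : Finset ℕ} {α : ℕ} {u : ℤ × ℤ} :
    u ∈ AddSubmonoid.closure {v : ℤ × ℤ | ∃ a ∈ A, v = ((a : ℤ), (α : ℤ) - (a : ℤ))} ↔
      ∃ m x : ℕ, x ∈ sumset A m ∧ u = ((x : ℤ), (m * α : ℤ) - x) := by
  constructor
  · intro hu
    induction hu using AddSubmonoid.closure_induction with
    | mem v hv =>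
      obtain ⟨a, ha, rfl⟩ := hv
      refine ⟨1, a, ?_, ?_⟩
      · show a ∈ sumset A 0 + A
        exact Finset.mem_add.2 ⟨0, by simp [sumset], a, ha, by simp⟩
      · simp
    | zero => exact ⟨0, 0, by simp [sumset], by simp; rfl⟩
    | add x y hx hy ihx ihy =>
      obtain ⟨m, x', hx', rfl⟩ := ihx
      obtain ⟨n, y', hy', rfl⟩ := ihy
      refine ⟨m + n, x' + y', mem_sumset_add hx' hy', ?_⟩
      simp [Prod.ext_iff]
      push_cast
      ring
  · rintro ⟨m, x, hx, rfl⟩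
    induction m generalizing x with
    | zero =>
      simp [sumset] at hx
      subst hx
      convert AddSubmonoid.zero_mem _ using 1
      simp
    | succ m ih =>
      rw [sumset] at hx
      obtain ⟨b, hb, a, ha, rfl⟩ := Finset.mem_add.1 hx
      have h2 : ((a : ℤ), (α : ℤ) - a) ∈
          AddSubmonoid.closure {v : ℤ × ℤ | ∃ a ∈ A, v = ((a : ℤ), (α : ℤ) - (a : ℤ))} :=
        AddSubmonoid.subset_closure ⟨a, ha, rfl⟩
      have := AddSubmonoid.add_mem _ (ih b hb) h2
      convert this using 1
      simp only [Prod.mk_add_mk, Prod.mk.injEq]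
      push_cast
      constructor <;> ring

lemma mem_G_iff {A : Finset ℕ} {α : ℕ} (h0 : 0 ∈ A) (h1 : 1 ∈ A) {u : ℤ × ℤ} :
    u ∈ AddSubgroup.closure {v : ℤ × ℤ | ∃ a ∈ A, v = ((a : ℤ), (α : ℤ) - (a : ℤ))} ↔
      (α : ℤ) ∣ (u.1 + u.2) := by
  constructor
  · intro hu
    induction hu using AddSubgroup.closure_induction with
    | mem v hv => obtain ⟨a, ha, rfl⟩ := hv; simp
    | zero => simp
    | add x y hx hy ihx ihy => simpa [add_add_add_comm] using dvd_add ihx ihy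
    | neg x hx ihx =>
      have h' : (-x).1 + (-x).2 = -(x.1 + x.2) := by simp; ring
      rw [h']
      exact dvd_neg.2 ihx
  · rintro ⟨k, hk⟩
    have hA : ((1 : ℤ), (α : ℤ) - 1) ∈
        AddSubgroup.closure {v : ℤ × ℤ | ∃ a ∈ A, v = ((a : ℤ), (α : ℤ) - (a : ℤ))} :=
      AddSubgroup.subset_closure ⟨1, h1, by simp⟩
    have hB : ((0 : ℤ), (α : ℤ)) ∈
        AddSubgroup.closure {v : ℤ × ℤ | ∃ a ∈ A, v = ((a : ℤ), (α : ℤ) - (a : ℤ))} :=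
      AddSubgroup.subset_closure ⟨0, h0, by simp⟩
    have h11 := AddSubgroup.sub_mem _ hA hB
    have hmem := AddSubgroup.add_mem _ (AddSubgroup.zsmul_mem _ h11 u.1)
      (AddSubgroup.zsmul_mem _ hB k)
    have key : u = u.1 • ((1 : ℤ), (-1 : ℤ)) + k • ((0 : ℤ), (α : ℤ)) := by
      apply Prod.ext
      · simp [Prod.smul_mk, zsmul_eq_mul]
      · simp [Prod.smul_mk, zsmul_eq_mul]
        linarith
    rw [key]
    convert hmem using 2
    apply Prod.ext <;> simp [Prod.mk_sub_mk]

theorem stmt_3 (𝒜 : Finset ℕ) (hne : 𝒜.Nonempty) (h0 : 0 ∈ 𝒜)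
    (α : ℕ) (hα : α = 𝒜.max' hne) (hα2 : 2 ≤ α)
    (h1 : 1 ∈ 𝒜) (hαm1 : α - 1 ∈ 𝒜)
    (S : AddSubmonoid (ℤ × ℤ))
    (hS : S = AddSubmonoid.closure {v : ℤ × ℤ | ∃ a ∈ 𝒜, v = ((a : ℤ), (α : ℤ) - (a : ℤ))})
    (G : AddSubgroup (ℤ × ℤ))
    (hG : G = AddSubgroup.closure {v : ℤ × ℤ | ∃ a ∈ 𝒜, v = ((a : ℤ), (α : ℤ) - (a : ℤ))}) :
    (∀ u : ℤ × ℤ, u ∈ G → 0 ≤ u.1 → 0 ≤ u.2 → (α : ℤ) ∣ (u.1 + u.2)) ∧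
    sSup {d : ℕ | d = 0 ∨ ∃ u : ℤ × ℤ,
        u ∈ G ∧ 0 ≤ u.1 ∧ 0 ≤ u.2 ∧ u ∉ S ∧ (d : ℤ) * (α : ℤ) = u.1 + u.2} + 1 =
      sInf {m : ℕ | 1 ≤ m ∧ IsFull (sumset 𝒜 m)} := by
  subst hS hG
  have hαA : α ∈ 𝒜 := hα ▸ 𝒜.max'_mem hne
  have hb : ∀ a ∈ 𝒜, a ≤ α := fun a ha => hα ▸ 𝒜.le_max' a ha
  refine ⟨fun u hu _ _ => (mem_G_iff h0 h1).1 hu, ?_⟩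
  set M : Set ℕ := {m | 1 ≤ m ∧ IsFull (sumset 𝒜 m)} with hM
  have hMne : M.Nonempty :=
    ⟨α - 1, by omega, (α - 1) * α, full_of_ge h0 h1 hαm1 hαA hb hα2 le_rfl⟩
  set r := sInf M with hr
  have hrM : r ∈ M := Nat.sInf_mem hMne
  obtain ⟨hr1, hrfull⟩ := hrM
  have hfull_iff : ∀ m, IsFull (sumset 𝒜 m) ↔ sumset 𝒜 m = Finset.Iic (m * α) := by
    intro m
    constructor
    · rintro ⟨n, hn⟩
      have hmα : m * α ∈ sumset 𝒜 m := nsmul_mem_sumset hαA m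
      have h1' : m * α ≤ n := Finset.mem_Iic.1 (hn ▸ hmα)
      have h2' : n ≤ m * α := sumset_bound hb (hn ▸ Finset.mem_Iic.2 le_rfl)
      rw [hn, le_antisymm h1' h2']
    · intro h; exact ⟨m * α, h⟩
  have hfull_ge : ∀ d, r ≤ d → sumset 𝒜 d = Finset.Iic (d * α) := by
    intro d hd
    induction d, hd using Nat.le_induction with
    | base => exact (hfull_iff r).1 hrfull
    | succ n hn ih => exact full_step h0 hαA hb (by omega) ih
  have hD : {d : ℕ | d = 0 ∨ ∃ u : ℤ × ℤ,
      u ∈ AddSubgroup.closure {v : ℤ × ℤ | ∃ a ∈ 𝒜, v = ((a : ℤ), (α : ℤ) - (a : ℤ))} ∧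
      0 ≤ u.1 ∧ 0 ≤ u.2 ∧
      u ∉ AddSubmonoid.closure {v : ℤ × ℤ | ∃ a ∈ 𝒜, v = ((a : ℤ), (α : ℤ) - (a : ℤ))} ∧
      (d : ℤ) * (α : ℤ) = u.1 + u.2} = Set.Iio r := by
    ext d
    simp only [Set.mem_setOf_eq, Set.mem_Iio]
    constructor
    · rintro (rfl | ⟨u, huG, hu1, hu2, huS, hdeg⟩)
      · omega
      · by_contra hcon
        have hrd : r ≤ d := by omega
        have hfull := hfull_ge d hrd
        have hx : (u.1.toNat : ℤ) = u.1 := Int.toNat_of_nonneg hu1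
        have hxle : u.1.toNat ≤ d * α := by
          have : u.1 ≤ (d : ℤ) * α := by linarith
          omega
        have hxmem : u.1.toNat ∈ sumset 𝒜 d := hfull ▸ Finset.mem_Iic.2 hxle
        apply huS
        apply mem_S_iff.2 ⟨d, u.1.toNat, hxmem, ?_⟩
        apply Prod.ext
        · simp [hx]
        · simp only []
          push_cast [hx]
          linarith
    · intro hd
      by_cases hd0 : d = 0
      · exact Or.inl hd0
      right
      have hnf : ¬ IsFull (sumset 𝒜 d) := by
        intro h
        have : r ≤ d := Nat.sInf_le ⟨by omega, h⟩
        omega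
      have hex : ∃ x, x ≤ d * α ∧ x ∉ sumset 𝒜 d := by
        by_contra h
        push_neg at h
        apply hnf
        rw [hfull_iff]
        exact Finset.Subset.antisymm
          (fun x hx => Finset.mem_Iic.2 (sumset_bound hb hx))
          (fun x hx => h x (Finset.mem_Iic.1 hx))
      obtain ⟨x, hxle, hxn⟩ := hex
      refine ⟨((x : ℤ), ((d * α - x : ℕ) : ℤ)), ?_, by positivity, by positivity, ?_, ?_⟩
      · apply (mem_G_iff h0 h1).2
        refine ⟨d, ?_⟩
        push_cast [hxle]
        ring
      · intro hS'
        obtain ⟨m, y, hy, heq⟩ := mem_S_iff.1 hS'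
        rw [Prod.ext_iff] at heq
        obtain ⟨he1, he2⟩ := heq
        simp only [] at he1 he2
        have hxy : x = y := by exact_mod_cast he1
        have hdm : d = m := by
          have : ((d * α - x : ℕ) : ℤ) = (d : ℤ) * α - x := by push_cast [hxle]; ring
          rw [this, he1] at he2
          have : (d : ℤ) * α = (m : ℤ) * α := by linarith
          have : (d : ℤ) = m := by
            have hα0 : (α : ℤ) ≠ 0 := by exact_mod_cast (by omega : α ≠ 0)
            exact mul_right_cancel₀ hα0 this
          exact_mod_cast this
        exact hxn (hxy ▸ hdm ▸ hy)
      · push_cast [hxle]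
        ring
  rw [hD]
  have hsup : sSup (Set.Iio r) = r - 1 := by
    apply le_antisymm
    · exact csSup_le ⟨0, by simp only [Set.mem_Iio]; omega⟩ (fun d hd => by
        simp only [Set.mem_Iio] at hd; omega)
    · exact le_csSup ⟨r, fun d hd => le_of_lt hd⟩ (by simp; omega)
  omega
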